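/- arXiv:1803.08784 — 2 statements merged into one kernel-verified Lean document; each statement's English description precedes it below -/
import Mathlib

section
/- Let F : ℝⁿ × ℝᵐ → ℝⁿ be continuous, and let X : ℝ → ℝⁿ and E : ℝ → ℝᵐ be continuous functions such that X is differentiable with X'(t) = F(X(t), E(t)) for all t, X converges to X* and E converges to E* as t → ∞. Then F(X*, E*) = 0. -/
open Filter

theorem equilibrium_is_zero_of_F (n m : ℕ)
    (F : EuclideanSpace ℝ (Fin n) × EuclideanSpace ℝ (Fin m) → EuclideanSpace ℝ (Fin n))
    (hF : Continuous F)
    (X : ℝ → EuclideanSpace ℝ (Fin n)) (E : ℝ → EuclideanSpace ℝ (Fin m))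
    (hXdiff : Differentiable ℝ X) (hE : Continuous E)
    (hode : ∀ t : ℝ, deriv X t = F (X t, E t))
    (Xstar : EuclideanSpace ℝ (Fin n)) (Estar : EuclideanSpace ℝ (Fin m))
    (hXconv : Tendsto X atTop (nhds Xstar))
    (hEconv : Tendsto E atTop (nhds Estar)) :
    F (Xstar, Estar) = 0 := by
  set L := F (Xstar, Estar) with hL
  -- deriv X tends to L
  have hderiv : Tendsto (fun t => deriv X t) atTop (nhds L) := by
    have : Tendsto (fun t => (X t, E t)) atTop (nhds (Xstar, Estar)) :=
      hXconv.prodMk_nhds hEconv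
    have := (hF.tendsto (Xstar, Estar)).comp this
    simpa [hode, Function.comp_def, hL] using this
  -- consider g t = ⟪L, X t⟫
  set φ : EuclideanSpace ℝ (Fin n) →L[ℝ] ℝ := innerSL ℝ L with hφ
  set g : ℝ → ℝ := fun t => φ (X t) with hg
  have hgderiv : ∀ t, HasDerivAt g (φ (deriv X t)) t := by
    intro t
    exact (φ.hasFDerivAt.comp_hasDerivAt t (hXdiff t).hasDerivAt)
  -- g (k+1) - g k → 0
  have hgconv : Tendsto g atTop (nhds (φ Xstar)) :=
    (φ.continuous.tendsto _).comp hXconv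
  have hdiff0 : Tendsto (fun k : ℕ => g (k + 1) - g k) atTop (nhds 0) := by
    have h1 : Tendsto (fun k : ℕ => g (k + 1)) atTop (nhds (φ Xstar)) :=
      hgconv.comp (tendsto_natCast_atTop_atTop.atTop_add tendsto_const_nhds)
    have h2 : Tendsto (fun k : ℕ => g (k : ℝ)) atTop (nhds (φ Xstar)) :=
      hgconv.comp tendsto_natCast_atTop_atTop
    simpa using h1.sub h2
  -- MVT: choose c k ∈ (k, k+1) with deriv g (c k) = g(k+1) - g k
  have hmvt : ∀ k : ℕ, ∃ c ∈ Set.Ioo (k : ℝ) (k + 1), φ (deriv X c) = g (k + 1) - g k := by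
    intro k
    have hlt : (k : ℝ) < k + 1 := by linarith
    obtain ⟨c, hc, hc'⟩ := exists_hasDerivAt_eq_slope g (fun t => φ (deriv X t)) hlt
      (Continuous.continuousOn (by
        have : Continuous fun t => φ (deriv X t) := by
          have hcont : Continuous (deriv X) := by
            have : deriv X = fun t => F (X t, E t) := funext hode
            rw [this]
            exact hF.comp ((continuous_iff_continuousAt.mpr fun t =>
              hXdiff.continuous.continuousAt).prodMk hE)
          exact φ.continuous.comp hcont
        -- g is continuous since it's differentiable
        exact Continuous.comp φ.continuous hXdiff.continuous))
      (fun x _ => hgderiv x)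
    refine ⟨c, hc, ?_⟩
    rw [hc']
    field_simp
    ring
  choose c hc hceq using hmvt
  have hcat : Tendsto c atTop atTop := by
    apply tendsto_atTop_mono (fun k => (hc k).1.le)
    exact tendsto_natCast_atTop_atTop
  -- φ (deriv X (c k)) → φ L and also → 0
  have h1 : Tendsto (fun k => φ (deriv X (c k))) atTop (nhds (φ L)) :=
    ((φ.continuous.tendsto _).comp hderiv).comp hcat
  have h2 : Tendsto (fun k => φ (deriv X (c k))) atTop (nhds 0) := by
    simpa [hceq] using hdiff0
  have hφL : φ L = 0 := tendsto_nhds_unique h1 h2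
  rw [hφ] at hφL
  simp only [innerSL_apply_apply] at hφL
  exact inner_self_eq_zero.mp hφL
end

section
/- Let F : ℝⁿ × ℝᵐ → ℝⁿ be continuous, E : ℝ → ℝᵐ continuous converging to E*, and X : ℝ → ℝⁿ a solution of X'(t) = F(X(t), E(t)) converging to X*. Define f(x, e) := x + F(x, e). Then X* is a fixed point of the map x ↦ f(x, E*), i.e. X* = X* + F(X*, E*). -/
open Filter

theorem equilibrium_is_fixed_point_of_scm (n m : ℕ)
    (F : EuclideanSpace ℝ (Fin n) × EuclideanSpace ℝ (Fin m) → EuclideanSpace ℝ (Fin n))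
    (hF : Continuous F)
    (X : ℝ → EuclideanSpace ℝ (Fin n)) (E : ℝ → EuclideanSpace ℝ (Fin m))
    (hXdiff : Differentiable ℝ X) (hE : Continuous E)
    (hode : ∀ t : ℝ, deriv X t = F (X t, E t))
    (Xstar : EuclideanSpace ℝ (Fin n)) (Estar : EuclideanSpace ℝ (Fin m))
    (hXconv : Tendsto X atTop (nhds Xstar))
    (hEconv : Tendsto E atTop (nhds Estar))
    (f : EuclideanSpace ℝ (Fin n) × EuclideanSpace ℝ (Fin m) → EuclideanSpace ℝ (Fin n))
    (hf : ∀ x e, f (x, e) = x + F (x, e)) :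
    Xstar = f (Xstar, Estar) := by
  set L := F (Xstar, Estar) with hL
  -- deriv X is continuous and tends to L
  have hderiv_cont : Continuous (deriv X) := by
    have : deriv X = fun t => F (X t, E t) := funext hode
    rw [this]
    exact hF.comp ((hXdiff.continuous).prodMk hE)
  have hderiv_tendsto : Tendsto (deriv X) atTop (nhds L) := by
    have : Tendsto (fun t => F (X t, E t)) atTop (nhds L) :=
      (hF.tendsto _).comp (hXconv.prodMk_nhds hEconv)
    simpa [funext hode] using this
  -- increments equal integral of derivative
  have hinc : ∀ t : ℝ, X (t + 1) - X t = ∫ s in t..(t+1), deriv X s := by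
    intro t
    rw [intervalIntegral.integral_deriv_eq_sub (fun s _ => hXdiff s)
      (hderiv_cont.intervalIntegrable t (t+1))]
  -- increments tend to L
  have hincL : Tendsto (fun t => X (t + 1) - X t) atTop (nhds L) := by
    rw [Metric.tendsto_atTop]
    intro ε hε
    rw [Metric.tendsto_atTop] at hderiv_tendsto
    obtain ⟨T, hT⟩ := hderiv_tendsto (ε / 2) (by linarith)
    refine ⟨T, fun t ht => ?_⟩
    have key : ∀ s ∈ Set.Icc t (t+1), ‖deriv X s - L‖ ≤ ε / 2 := by
      intro s hs
      have := hT s (le_trans ht hs.1)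
      rw [dist_eq_norm] at this
      linarith
    have hle : t ≤ t + 1 := by linarith
    have hint : ∫ s in t..(t+1), (deriv X s - L) =
        (X (t+1) - X t) - L := by
      rw [intervalIntegral.integral_sub (hderiv_cont.intervalIntegrable t (t+1))
        (intervalIntegrable_const), ← hinc t, intervalIntegral.integral_const]
      simp
    have hbound : ‖∫ s in t..(t+1), (deriv X s - L)‖ ≤ (ε/2) * |(t+1) - t| :=
      intervalIntegral.norm_integral_le_of_norm_le_const (by
        intro s hs
        apply key
        rw [Set.uIoc_of_le hle] at hs
        exact ⟨le_of_lt hs.1, hs.2⟩)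
    rw [hint] at hbound
    rw [dist_eq_norm]
    have : |(t+1) - t| = 1 := by norm_num
    rw [this, mul_one] at hbound
    linarith
  -- increments tend to 0
  have hinc0 : Tendsto (fun t => X (t + 1) - X t) atTop (nhds 0) := by
    have h1 : Tendsto (fun t => X (t + 1)) atTop (nhds Xstar) :=
      hXconv.comp (tendsto_atTop_add_const_right _ 1 tendsto_id)
    simpa using h1.sub hXconv
  have hL0 : L = 0 := tendsto_nhds_unique hincL hinc0
  rw [hf, ← hL, hL0, add_zero]
end
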